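/- Fix β > 0. For every K ∈ ℝⁿ and every (φ, λ, t) ∈ ℝⁿ × ℝ × [0,1) with H_K(φ, λ, t) = 0, one has φᵀφ = 1/h and |λ| ≤ max_i |K_i| + ρ(D) + β/h, where ρ(D) denotes the maximum of |μ| over all eigenvalues μ of D. In particular every connected component of the zero set of H_K in ℝⁿ × ℝ × [0,1) is bounded. -/

import Mathlib

open MeasureTheory Matrix

/-- The 1D homotopy map H_K(φ, λ, t). -/
noncomputable def homotopy1D {n : ℕ} (h β : ℝ) (D : Matrix (Fin n) (Fin n) ℝ)
    (K : Fin n → ℝ) (p : (Fin n → ℝ) × ℝ × ℝ) : (Fin n → ℝ) × ℝ :=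
  ((1 - p.2.2) • (fun i => K i * p.1 i) + D.mulVec p.1
      + (p.2.2 * β) • (fun i => p.1 i ^ 3) - p.2.1 • p.1,
    (1 / 2) * (1 / h - ∑ i, p.1 i ^ 2))

lemma rayleigh_bound {n : ℕ} (D : Matrix (Fin n) (Fin n) ℝ) (hD : D.IsHermitian) (ρ : ℝ)
    (hub : ∀ μ : ℝ, (∃ y : Fin n → ℝ, y ≠ 0 ∧ D.mulVec y = μ • y) → |μ| ≤ ρ)
    (x : Fin n → ℝ) : |∑ i, x i * D.mulVec x i| ≤ ρ * ∑ i, x i ^ 2 := by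
  classical
  set b := hD.eigenvectorBasis with hb
  set μ := hD.eigenvalues with hμ
  have hμρ : ∀ i, |μ i| ≤ ρ := fun i =>
    hub (μ i) ⟨⇑(b i), by
      intro h0
      have := b.orthonormal.ne_zero i
      exact this (by ext j; exact congrFun h0 j), hD.mulVec_eigenvectorBasis i⟩
  have hDT : D.transpose = D := by
    ext i j
    have := congrFun (congrFun hD i) j
    simpa using this
  have hsymm : ∀ u w : Fin n → ℝ, u ⬝ᵥ D *ᵥ w = (D *ᵥ u) ⬝ᵥ w := by
    intro u w
    rw [Matrix.dotProduct_mulVec, ← Matrix.mulVec_transpose, hDT]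
  let y : EuclideanSpace ℝ (Fin n) := WithLp.toLp 2 x
  let z : EuclideanSpace ℝ (Fin n) := WithLp.toLp 2 (D.mulVec x)
  have hbz : ∀ i, (inner ℝ (b i) z : ℝ) = μ i * inner ℝ (b i) y := by
    intro i
    have h1 : (inner ℝ (b i) z : ℝ) = (b i : Fin n → ℝ) ⬝ᵥ (D.mulVec x) := by
      simp [PiLp.inner_apply, dotProduct, z, mul_comm]
    rw [h1, hsymm]
    erw [hD.mulVec_eigenvectorBasis i]
    simp only [dotProduct, PiLp.inner_apply, Finset.mul_sum, RCLike.inner_apply,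
      starRingEnd_apply, star_trivial, Pi.smul_apply, smul_eq_mul]
    exact Finset.sum_congr rfl fun j _ => by simp only [hμ, hb, WithLp.ofLp_smul, Pi.smul_apply, smul_eq_mul]; ring
  have hyz : (inner ℝ y z : ℝ) = ∑ i, μ i * (inner ℝ (b i) y : ℝ) ^ 2 := by
    rw [← b.sum_inner_mul_inner y z]
    refine Finset.sum_congr rfl fun i _ => ?_
    rw [hbz i, real_inner_comm y (b i)]
    ring
  have hyy : (inner ℝ y y : ℝ) = ∑ i, (inner ℝ (b i) y : ℝ) ^ 2 := by
    rw [← b.sum_inner_mul_inner y y]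
    refine Finset.sum_congr rfl fun i _ => ?_
    rw [real_inner_comm y (b i)]
    ring
  have e1 : (inner ℝ y z : ℝ) = ∑ i, x i * D.mulVec x i := by
    simp [PiLp.inner_apply, y, z, mul_comm]
  have e2 : (inner ℝ y y : ℝ) = ∑ i, x i ^ 2 := by
    simp only [PiLp.inner_apply, y, RCLike.inner_apply, conj_trivial, sq]
  rw [← e1, ← e2, hyz, hyy, Finset.mul_sum]
  refine (Finset.abs_sum_le_sum_abs _ _).trans (Finset.sum_le_sum fun i _ => ?_)
  rw [abs_mul, abs_pow, sq_abs]
  exact mul_le_mul_of_nonneg_right (hμρ i) (sq_nonneg _)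

/-- on the zero set of the 1D homotopy (with t ∈ [0,1)), the
eigenvector is normalized and λ is bounded by max|K_i| + ρ(D) + β/h; in
particular every connected component of the zero set is bounded. -/
theorem stmt_12 (n : ℕ) (hn : 1 ≤ n) (h : ℝ) (hh : 0 < h)
    (v : Fin n → ℝ) (hv : ∀ i, 0 ≤ v i)
    (D : Matrix (Fin n) (Fin n) ℝ)
    (hDdiag : ∀ i : Fin n, D i i = 1 / h ^ 2 + v i)
    (hDoff : ∀ i j : Fin n, |(i : ℤ) - (j : ℤ)| = 1 → D i j = -(1 / (2 * h ^ 2)))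
    (hDzero : ∀ i j : Fin n, 2 ≤ |(i : ℤ) - (j : ℤ)| → D i j = 0)
    (β : ℝ) (hβ : 0 < β)
    (ρD : ℝ)
    (hρD : IsGreatest { r : ℝ | ∃ μ : ℝ,
      (∃ y : Fin n → ℝ, y ≠ 0 ∧ D.mulVec y = μ • y) ∧ r = |μ| } ρD)
    (K : Fin n → ℝ) :
    (∀ (φ : Fin n → ℝ) (lam t : ℝ), 0 ≤ t → t < 1 →
      homotopy1D h β D K (φ, lam, t) = 0 →
        (∑ i, φ i ^ 2) = 1 / h ∧
        |lam| ≤ (⨆ i, |K i|) + ρD + β / h) ∧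
    (∀ p : (Fin n → ℝ) × ℝ × ℝ,
      p ∈ {q : (Fin n → ℝ) × ℝ × ℝ | 0 ≤ q.2.2 ∧ q.2.2 < 1 ∧ homotopy1D h β D K q = 0} →
      Bornology.IsBounded (connectedComponentIn
        {q : (Fin n → ℝ) × ℝ × ℝ | 0 ≤ q.2.2 ∧ q.2.2 < 1 ∧ homotopy1D h β D K q = 0} p)) := by
  haveI : Nonempty (Fin n) := ⟨⟨0, hn⟩⟩
  have hsym : ∀ i j, D j i = D i j := by
    intro i j
    rcases eq_or_ne i j with rfl | hij
    · rfl
    · have hne : ((i : ℤ)) ≠ (j : ℤ) := by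
        intro hc
        exact hij (Fin.ext (by exact_mod_cast hc))
      have h1 : (1 : ℤ) ≤ |(i : ℤ) - (j : ℤ)| := by
        rcases abs_cases ((i : ℤ) - (j : ℤ)) with ⟨he, _⟩ | ⟨he, _⟩ <;> omega
      rcases eq_or_lt_of_le h1 with heq | hlt
      · rw [hDoff i j heq.symm, hDoff j i (by rw [abs_sub_comm]; exact heq.symm)]
      · have h2 : (2 : ℤ) ≤ |(i : ℤ) - (j : ℤ)| := hlt
        rw [hDzero i j h2, hDzero j i (by rw [abs_sub_comm]; exact h2)]
  have hHerm : D.IsHermitian := by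
    ext i j
    rw [Matrix.conjTranspose_apply, star_trivial]
    exact hsym i j
  have hub : ∀ μ : ℝ, (∃ y : Fin n → ℝ, y ≠ 0 ∧ D.mulVec y = μ • y) → |μ| ≤ ρD :=
    fun μ hμ => hρD.2 ⟨μ, hμ, rfl⟩
  have hρ0 : 0 ≤ ρD := by
    obtain ⟨μ0, _, hμ0⟩ := hρD.1
    rw [hμ0]; exact abs_nonneg _
  set M := ⨆ i, |K i| with hM
  have hMi : ∀ i, |K i| ≤ M := fun i =>
    le_ciSup (f := fun i => |K i|) (Set.Finite.bddAbove (Set.finite_range _)) i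
  have hM0 : 0 ≤ M := le_trans (abs_nonneg _) (hMi (Classical.arbitrary _))
  have hg : 0 < 1 / h := by positivity
  have part1 : ∀ (φ : Fin n → ℝ) (lam t : ℝ), 0 ≤ t → t < 1 →
      homotopy1D h β D K (φ, lam, t) = 0 →
        (∑ i, φ i ^ 2) = 1 / h ∧ |lam| ≤ M + ρD + β / h := by
    intro φ lam t ht0 ht1 hzero
    rw [Prod.ext_iff] at hzero
    obtain ⟨h1, h2⟩ := hzero
    simp only [homotopy1D] at h1 h2
    have hnorm : (∑ i, φ i ^ 2) = 1 / h := by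
      have : (1 / 2 : ℝ) * (1 / h - ∑ i, φ i ^ 2) = 0 := h2
      linarith
    refine ⟨hnorm, ?_⟩
    have eq1 : ∀ i, (1 - t) * (K i * φ i) + D.mulVec φ i + (t * β) * φ i ^ 3
        - lam * φ i = 0 := by
      intro i
      have e := congrFun h1 i
      simpa using e
    set a := ∑ i, K i * φ i ^ 2 with hadef
    set q := ∑ i, φ i * D.mulVec φ i with hqdef
    set s := ∑ i, φ i ^ 4 with hsdef
    have hlam : lam * (1 / h) = (1 - t) * a + q + (t * β) * s := by
      have hmain : (1 - t) * a + q + (t * β) * s - lam * (∑ i, φ i ^ 2) = 0 := by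
        rw [hadef, hqdef, hsdef, Finset.mul_sum, Finset.mul_sum, Finset.mul_sum,
          ← Finset.sum_add_distrib, ← Finset.sum_add_distrib, ← Finset.sum_sub_distrib]
        apply Finset.sum_eq_zero
        intro i _
        linear_combination φ i * eq1 i
      rw [hnorm] at hmain
      linarith
    have ha : |a| ≤ M * (1 / h) := by
      calc |a| ≤ ∑ i, |K i * φ i ^ 2| := Finset.abs_sum_le_sum_abs _ _
        _ ≤ ∑ i, M * φ i ^ 2 := by
            refine Finset.sum_le_sum fun i _ => ?_
            rw [abs_mul, abs_pow, sq_abs]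
            exact mul_le_mul_of_nonneg_right (hMi i) (sq_nonneg _)
        _ = M * ∑ i, φ i ^ 2 := (Finset.mul_sum _ _ _).symm
        _ = M * (1 / h) := by rw [hnorm]
    have hq : |q| ≤ ρD * (1 / h) := by
      have := rayleigh_bound D hHerm ρD hub φ
      rwa [hnorm] at this
    have hs0 : 0 ≤ s := Finset.sum_nonneg fun i _ => by positivity
    have hs4 : s ≤ (1 / h) ^ 2 := by
      have h4 : s = ∑ i, (φ i ^ 2) ^ 2 := by
        refine Finset.sum_congr rfl fun i _ => by ring
      rw [h4, ← hnorm]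
      exact Finset.sum_sq_le_sq_sum_of_nonneg fun i _ => sq_nonneg _
    have hA1 : |(1 - t) * a| ≤ M * (1 / h) := by
      rw [abs_mul, abs_of_nonneg (by linarith : (0:ℝ) ≤ 1 - t)]
      calc (1 - t) * |a| ≤ 1 * (M * (1 / h)) :=
          mul_le_mul (by linarith) ha (abs_nonneg _) one_pos.le
        _ = M * (1 / h) := one_mul _
    have hT : |(t * β) * s| ≤ β * ((1 / h) * (1 / h)) := by
      rw [abs_of_nonneg (mul_nonneg (mul_nonneg ht0 hβ.le) hs0)]
      nlinarith [mul_nonneg (mul_nonneg (by linarith : (0:ℝ) ≤ 1 - t) hβ.le) hs0,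
        mul_le_mul_of_nonneg_left hs4 hβ.le]
    have key : |lam| * (1 / h) ≤ (M + ρD + β * (1 / h)) * (1 / h) := by
      have e : |lam| * (1 / h) = |(1 - t) * a + q + (t * β) * s| := by
        rw [← abs_of_pos hg, ← abs_mul, hlam]
      rw [e]
      calc |(1 - t) * a + q + (t * β) * s|
          ≤ |(1 - t) * a| + |q| + |(t * β) * s| := abs_add_three _ _ _
        _ ≤ M * (1 / h) + ρD * (1 / h) + β * ((1 / h) * (1 / h)) := by
            exact add_le_add (add_le_add hA1 hq) hT
        _ = (M + ρD + β * (1 / h)) * (1 / h) := by ring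
    have := le_of_mul_le_mul_right key hg
    rwa [mul_one_div] at this
  constructor
  · exact part1
  · intro p hp
    set S := {q : (Fin n → ℝ) × ℝ × ℝ | 0 ≤ q.2.2 ∧ q.2.2 < 1 ∧ homotopy1D h β D K q = 0}
      with hS
    refine Bornology.IsBounded.subset ?_ (connectedComponentIn_subset S p)
    rw [isBounded_iff_forall_norm_le]
    set C := max (Real.sqrt (1 / h)) (max (M + ρD + β / h) 1) with hC
    have hC1 : (1 : ℝ) ≤ C := le_max_of_le_right (le_max_right _ _)
    have hC0 : (0 : ℝ) ≤ C := le_trans zero_le_one hC1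
    refine ⟨C, fun x hx => ?_⟩
    obtain ⟨ht0, ht1, hzero⟩ := hx
    obtain ⟨hnorm, hlam⟩ := part1 x.1 x.2.1 x.2.2 ht0 ht1 (by
      rw [show ((x.1, x.2.1, x.2.2) : (Fin n → ℝ) × ℝ × ℝ) = x from rfl]; exact hzero)
    rw [Prod.norm_def, Prod.norm_def]
    refine max_le ?_ (max_le ?_ ?_)
    · rw [pi_norm_le_iff_of_nonneg hC0]
      intro i
      rw [Real.norm_eq_abs, ← Real.sqrt_sq_eq_abs]
      refine le_trans (Real.sqrt_le_sqrt ?_) (le_max_left _ _)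
      rw [← hnorm]
      exact Finset.single_le_sum (fun j _ => sq_nonneg (x.1 j)) (Finset.mem_univ i)
    · rw [Real.norm_eq_abs]
      exact le_trans hlam (le_max_of_le_right (le_max_left _ _))
    · rw [Real.norm_eq_abs, abs_of_nonneg ht0]
      exact le_trans ht1.le hC1
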